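/- Let Λ be a free ℤ-module of finite rank and c : Λ → Λ a ℤ-linear involution. Then #(Λ⁻/(c−1)Λ) · 2^{rank Λ⁺} = #(Λ⁺/(c+1)Λ) · 2^{rank Λ⁻}. -/

import Mathlib

section helpers

lemma index_range_zsmul_two (G : Type*) [AddCommGroup G]
    [Module.Free ℤ G] [Module.Finite ℤ G] :
    (AddMonoidHom.range (zsmulAddGroupHom (2:ℤ) : G →+ G)).index
      = 2 ^ Module.finrank ℤ G := by
  classical
  set b := Module.Free.chooseBasis ℤ G with hb
  set ι := Module.Free.ChooseBasisIndex ℤ G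
  -- the mod-2 reduction map
  let f : G →+ (ι → ZMod 2) :=
    AddMonoidHom.mk' (fun g i => ((b.repr g i : ℤ) : ZMod 2)) (by
      intro x y; funext i; simp)
  have hsurj : Function.Surjective f := by
    intro v
    refine ⟨b.repr.symm (Finsupp.equivFunOnFinite.symm fun i => ((v i).val : ℤ)), ?_⟩
    funext i
    simp only [f, AddMonoidHom.mk'_apply, LinearEquiv.apply_symm_apply]
    simp [ZMod.natCast_rightInverse (v i)]
  have hker : f.ker = AddMonoidHom.range (zsmulAddGroupHom (2:ℤ) : G →+ G) := by
    ext g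
    simp only [AddMonoidHom.mem_ker, AddMonoidHom.mem_range, zsmulAddGroupHom_apply]
    constructor
    · intro h
      have hdvd : ∀ i, (2:ℤ) ∣ b.repr g i := by
        intro i
        have := congrFun h i
        simpa only [f, AddMonoidHom.mk'_apply, Pi.zero_apply,
          ZMod.intCast_zmod_eq_zero_iff_dvd, Nat.cast_ofNat] using this
      refine ⟨b.repr.symm ((b.repr g).mapRange (· / 2) (by simp)), ?_⟩
      apply b.repr.injective
      rw [show ((2:ℤ) • b.repr.symm ((b.repr g).mapRange (· / 2) (by simp)) : G)
            = b.repr.symm ((2:ℤ) • (b.repr g).mapRange (· / 2) (by simp)) by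
          rw [map_smul]]
      rw [LinearEquiv.apply_symm_apply]
      ext i
      simp only [Finsupp.smul_apply, Finsupp.mapRange_apply, smul_eq_mul]
      exact Int.mul_ediv_cancel' (hdvd i)
    · rintro ⟨x, rfl⟩
      funext i
      simp only [f, AddMonoidHom.mk'_apply, Pi.zero_apply]
      have : b.repr ((2:ℤ) • x) i = 2 * b.repr x i := by
        rw [map_smul]; simp
      rw [this]
      exact (ZMod.intCast_zmod_eq_zero_iff_dvd _ 2).mpr ⟨b.repr x i, by push_cast; ring⟩
  rw [← hker]
  have : (f.ker).index = Nat.card (G ⧸ f.ker) := rfl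
  rw [this, Nat.card_congr (QuotientAddGroup.quotientKerEquivOfSurjective f hsurj).toEquiv]
  rw [Nat.card_eq_fintype_card, Fintype.card_fun, ZMod.card,
    Module.finrank_eq_card_chooseBasisIndex ℤ G]

lemma relIndex_two_smul {Λ : Type*} [AddCommGroup Λ] (K : AddSubgroup Λ)
    [Module.Free ℤ ↥K] [Module.Finite ℤ ↥K] :
    (AddSubgroup.map (zsmulAddGroupHom (2:ℤ)) K).relIndex K
      = 2 ^ Module.finrank ℤ ↥K := by
  have h : (AddSubgroup.map (zsmulAddGroupHom (2:ℤ)) K).addSubgroupOf K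
      = AddMonoidHom.range (zsmulAddGroupHom (2:ℤ) : ↥K →+ ↥K) := by
    ext ⟨x, hx⟩
    simp only [AddSubgroup.mem_addSubgroupOf, AddSubgroup.mem_map,
      AddMonoidHom.mem_range, zsmulAddGroupHom_apply]
    constructor
    · rintro ⟨y, hy, h2⟩
      exact ⟨⟨y, hy⟩, Subtype.ext h2⟩
    · rintro ⟨⟨y, hy⟩, h2⟩
      exact ⟨y, hy, congrArg Subtype.val h2⟩
  rw [AddSubgroup.relIndex, h, index_range_zsmul_two ↥K]


lemma free_sub {Λ : Type*} [AddCommGroup Λ] [Module ℤ Λ] [Module.Free ℤ Λ] [Module.Finite ℤ Λ]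
    (B : Submodule ℤ Λ) : Module.Free ℤ ↥(B.toAddSubgroup) := by
  have h : (AddCommGroup.toIntModule ↥B) = B.module :=
    letI := AddCommGroup.uniqueIntModule (M := ↥B); Subsingleton.elim _ _
  have : Module.Free ℤ ↥B := by
    rw [show (AddCommGroup.toIntModule ↥B) = B.module from h]
    exact @Module.Free.of_basis ℤ ↥B _ _ B.module _ (B.basisOfPid (Module.Free.chooseBasis ℤ Λ)).2
  exact this

lemma finite_sub {Λ : Type*} [AddCommGroup Λ] [Module ℤ Λ] [Module.Free ℤ Λ] [Module.Finite ℤ Λ]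
    (B : Submodule ℤ Λ) : Module.Finite ℤ ↥(B.toAddSubgroup) := by
  have h : (AddCommGroup.toIntModule ↥B) = B.module :=
    letI := AddCommGroup.uniqueIntModule (M := ↥B); Subsingleton.elim _ _
  have : Module.Finite ℤ ↥B := by
    rw [show (AddCommGroup.toIntModule ↥B) = B.module from h]
    exact Module.Finite.iff_fg.mpr (IsNoetherian.noetherian B)
  exact this


end helpers

/-- Let `Λ` be a free `ℤ`-module of finite rank and `c : Λ → Λ` a `ℤ`-linear involution.
Then `#(Λ⁻/(c−1)Λ) · 2^(rank Λ⁺) = #(Λ⁺/(c+1)Λ) · 2^(rank Λ⁻)`,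
where `Λ⁺ = ker (c - 1)`, `Λ⁻ = ker (c + 1)`. -/
theorem card_quotient_mul_two_pow_eq (Λ : Type*) [AddCommGroup Λ] [Module ℤ Λ]
    [Module.Free ℤ Λ] [Module.Finite ℤ Λ]
    (c : Λ →ₗ[ℤ] Λ) (hc : c ∘ₗ c = LinearMap.id) :
    Nat.card ((LinearMap.ker (c + LinearMap.id)).toAddSubgroup ⧸
        (LinearMap.range (c - LinearMap.id)).toAddSubgroup.addSubgroupOf
          (LinearMap.ker (c + LinearMap.id)).toAddSubgroup) *
      2 ^ Module.finrank ℤ (LinearMap.ker (c - LinearMap.id)) =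
    Nat.card ((LinearMap.ker (c - LinearMap.id)).toAddSubgroup ⧸
        (LinearMap.range (c + LinearMap.id)).toAddSubgroup.addSubgroupOf
          (LinearMap.ker (c - LinearMap.id)).toAddSubgroup) *
      2 ^ Module.finrank ℤ (LinearMap.ker (c + LinearMap.id)) := by
  classical
  set A := LinearMap.ker (c - LinearMap.id) with hA
  set B := LinearMap.ker (c + LinearMap.id) with hB
  set Rm := LinearMap.range (c - LinearMap.id) with hRm
  set Rp := LinearMap.range (c + LinearMap.id) with hRp
  have hcc : ∀ x, c (c x) = x := fun x => congrArg (· x) (congrArg DFunLike.coe hc)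
  -- membership characterizations
  have hmemA : ∀ x, x ∈ A ↔ c x = x := by
    intro x
    simp [hA, LinearMap.mem_ker, LinearMap.sub_apply, sub_eq_zero]
  have hmemB : ∀ x, x ∈ B ↔ c x + x = 0 := by
    intro x
    simp [hB, LinearMap.mem_ker, LinearMap.add_apply]
  -- group-level subgroups
  set Ag := A.toAddSubgroup
  set Bg := B.toAddSubgroup
  set Rmg := Rm.toAddSubgroup
  set Rpg := Rp.toAddSubgroup
  set twoA := AddSubgroup.map (zsmulAddGroupHom (2:ℤ)) Ag with htwoA
  set twoB := AddSubgroup.map (zsmulAddGroupHom (2:ℤ)) Bg with htwoB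
  -- inclusions
  have hRmB : Rmg ≤ Bg := by
    rintro y ⟨x, rfl⟩
    show _ ∈ B
    rw [hmemB]
    simp only [LinearMap.sub_apply, LinearMap.id_apply, map_sub, hcc]
    abel
  have hRpA : Rpg ≤ Ag := by
    rintro y ⟨x, rfl⟩
    show _ ∈ A
    rw [hmemA]
    simp only [LinearMap.add_apply, LinearMap.id_apply, map_add, hcc]
    abel
  have h2B : twoB ≤ Rmg := by
    rintro y ⟨b, hb, rfl⟩
    have hb' : c b + b = 0 := (hmemB b).mp hb
    refine ⟨-b, ?_⟩
    have hcb : c b = -b := eq_neg_of_add_eq_zero_left hb'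
    simp only [LinearMap.sub_apply, LinearMap.id_apply, map_neg, zsmulAddGroupHom_apply,
      two_zsmul, hcb]
    abel
  have h2A : twoA ≤ Rpg := by
    rintro y ⟨a, ha, rfl⟩
    have ha' : c a = a := (hmemA a).mp ha
    refine ⟨a, ?_⟩
    simp only [LinearMap.add_apply, LinearMap.id_apply, zsmulAddGroupHom_apply, two_zsmul, ha']
  -- instances
  haveI : Module.Free ℤ ↥Ag := free_sub A
  haveI : Module.Finite ℤ ↥Ag := finite_sub A
  haveI : Module.Free ℤ ↥Bg := free_sub B
  haveI : Module.Finite ℤ ↥Bg := finite_sub B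
  -- the two middle relIndexes agree
  let gp : Λ →+ ↥Rpg := AddMonoidHom.mk'
    (fun x => ⟨(c + LinearMap.id : Λ →ₗ[ℤ] Λ) x, LinearMap.mem_range_self _ x⟩)
    (by intro x y; exact Subtype.ext (by simp; abel))
  let gm : Λ →+ ↥Rmg := AddMonoidHom.mk'
    (fun x => ⟨(c - LinearMap.id : Λ →ₗ[ℤ] Λ) x, LinearMap.mem_range_self _ x⟩)
    (by intro x y; exact Subtype.ext (by simp; abel))
  let Np := twoA.addSubgroupOf Rpg
  let Nm := twoB.addSubgroupOf Rmg
  let fp : Λ →+ ↥Rpg ⧸ Np := (QuotientAddGroup.mk' Np).comp gp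
  let fm : Λ →+ ↥Rmg ⧸ Nm := (QuotientAddGroup.mk' Nm).comp gm
  have hfp_surj : Function.Surjective fp := by
    rintro q
    obtain ⟨⟨y, x, rfl⟩, rfl⟩ := QuotientAddGroup.mk'_surjective Np q
    exact ⟨x, rfl⟩
  have hfm_surj : Function.Surjective fm := by
    rintro q
    obtain ⟨⟨y, x, rfl⟩, rfl⟩ := QuotientAddGroup.mk'_surjective Nm q
    exact ⟨x, rfl⟩
  have hkerp : ∀ x : Λ, fp x = 0 ↔ ∃ a ∈ Ag, (2:ℤ) • a = c x + x := by
    intro x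
    rw [show fp x = ((gp x : ↥Rpg) : ↥Rpg ⧸ Np) from rfl, QuotientAddGroup.eq_zero_iff]
    rw [AddSubgroup.mem_addSubgroupOf]
    rw [show ((gp x : ↥Rpg) : Λ) = c x + x from by simp [gp]]
    simp only [htwoA, AddSubgroup.mem_map, zsmulAddGroupHom_apply]
  have hkerm : ∀ x : Λ, fm x = 0 ↔ ∃ b ∈ Bg, (2:ℤ) • b = c x - x := by
    intro x
    rw [show fm x = ((gm x : ↥Rmg) : ↥Rmg ⧸ Nm) from rfl, QuotientAddGroup.eq_zero_iff]
    rw [AddSubgroup.mem_addSubgroupOf]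
    rw [show ((gm x : ↥Rmg) : Λ) = c x - x from by simp [gm]]
    simp only [htwoB, AddSubgroup.mem_map, zsmulAddGroupHom_apply]
  have hkereq : fp.ker = fm.ker := by
    ext x
    simp only [AddMonoidHom.mem_ker, hkerp, hkerm]
    constructor
    · rintro ⟨a, ha, h2⟩
      have ha' : c a = a := (hmemA a).mp ha
      rw [two_zsmul] at h2
      have hcx : c x = a + a - x := by rw [h2]; abel
      refine ⟨a - x, ?_, ?_⟩
      · show a - x ∈ B
        rw [hmemB, map_sub, ha', hcx]; abel
      · rw [two_zsmul, hcx]; abel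
    · rintro ⟨b, hb, h2⟩
      have hb' : c b = -b := eq_neg_of_add_eq_zero_left ((hmemB b).mp hb)
      rw [two_zsmul] at h2
      have hcx : c x = b + b + x := by rw [h2]; abel
      refine ⟨b + x, ?_, ?_⟩
      · show b + x ∈ A
        rw [hmemA, map_add, hb', hcx]; abel
      · rw [two_zsmul, hcx]; abel
  -- relIndex equality of the middle terms
  have hmid : twoA.relIndex Rpg = twoB.relIndex Rmg := by
    have e1 : Nat.card (↥Rpg ⧸ Np) = Nat.card (Λ ⧸ fp.ker) :=
      Nat.card_congr (QuotientAddGroup.quotientKerEquivOfSurjective fp hfp_surj).toEquiv.symm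
    have e2 : Nat.card (↥Rmg ⧸ Nm) = Nat.card (Λ ⧸ fm.ker) :=
      Nat.card_congr (QuotientAddGroup.quotientKerEquivOfSurjective fm hfm_surj).toEquiv.symm
    show Nat.card (↥Rpg ⧸ Np) = Nat.card (↥Rmg ⧸ Nm)
    rw [e1, e2, hkereq]
  -- counting
  have eB : twoB.relIndex Rmg * Rmg.relIndex Bg = 2 ^ Module.finrank ℤ ↥Bg := by
    rw [AddSubgroup.relIndex_mul_relIndex twoB Rmg Bg h2B hRmB, htwoB, relIndex_two_smul Bg]
  have eA : twoA.relIndex Rpg * Rpg.relIndex Ag = 2 ^ Module.finrank ℤ ↥Ag := by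
    rw [AddSubgroup.relIndex_mul_relIndex twoA Rpg Ag h2A hRpA, htwoA, relIndex_two_smul Ag]
  have hk_ne : twoB.relIndex Rmg ≠ 0 := by
    intro h
    rw [h, zero_mul] at eB
    exact (pow_ne_zero _ (two_ne_zero)) eB.symm
  show Rmg.relIndex Bg * 2 ^ Module.finrank ℤ ↥A = Rpg.relIndex Ag * 2 ^ Module.finrank ℤ ↥B
  have hfrA : Module.finrank ℤ ↥A = Module.finrank ℤ ↥Ag := rfl
  have hfrB : Module.finrank ℤ ↥B = Module.finrank ℤ ↥Bg := rfl
  rw [hfrA, hfrB]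
  apply Nat.eq_of_mul_eq_mul_left (Nat.pos_of_ne_zero hk_ne)
  calc twoB.relIndex Rmg * (Rmg.relIndex Bg * 2 ^ Module.finrank ℤ ↥Ag)
      = (twoB.relIndex Rmg * Rmg.relIndex Bg) * 2 ^ Module.finrank ℤ ↥Ag := by ring
    _ = 2 ^ Module.finrank ℤ ↥Bg * 2 ^ Module.finrank ℤ ↥Ag := by rw [eB]
    _ = (twoA.relIndex Rpg * Rpg.relIndex Ag) * 2 ^ Module.finrank ℤ ↥Bg := by rw [eA]; ring
    _ = twoB.relIndex Rmg * (Rpg.relIndex Ag * 2 ^ Module.finrank ℤ ↥Bg) := by rw [← hmid]; ring
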